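/- If ρ = [k_1, k_2, ...] with k_n = (n+5)², then ρ is a Roth number (i.e., for every δ > 0 there exists C > 0 with |ρ - p/q| ≥ C q^{-2-δ} for all rationals p/q), but ρ is not of bounded type. -/

import Mathlib

open Filter

theorem roth_aux (P Q : ℕ → ℤ)
    (hP0 : P 0 = 0) (hQ0 : Q 0 = 1) (hP1 : P 1 = 1) (hQ1 : Q 1 = 36)
    (hPr : ∀ n : ℕ, P (n+2) = ((n:ℤ)+7)^2 * P (n+1) + P n)
    (hQr : ∀ n : ℕ, Q (n+2) = ((n:ℤ)+7)^2 * Q (n+1) + Q n)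
    (ρ : ℝ) (hρ : Tendsto (fun n : ℕ => (P n : ℝ)/(Q n : ℝ)) atTop (nhds ρ))
    (δ : ℝ) (hδ : 0 < δ) :
    ∃ C : ℝ, 0 < C ∧ ∀ a b : ℤ, b ≠ 0 →
      C / (|b| : ℝ) ^ ((2 : ℝ) + δ) ≤ |ρ - (a : ℝ) / (b : ℝ)| := by
  -- positivity and monotonicity of Q
  have hmono : ∀ n : ℕ, 0 < Q n ∧ Q n ≤ Q (n+1) := by
    intro n
    induction n with
    | zero => rw [hQ0, hQ1]; norm_num
    | succ m ih =>
      obtain ⟨h1, h2⟩ := ih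
      have h3 := hQr m
      have hm : (0:ℤ) ≤ (m:ℤ) := Int.natCast_nonneg m
      have h0 : 0 < Q (m+1) := lt_of_lt_of_le h1 h2
      refine ⟨h0, ?_⟩
      have h4 : Q (m+1) ≤ ((m:ℤ)+7)^2 * Q (m+1) :=
        le_mul_of_one_le_left h0.le (by nlinarith)
      linarith
  have hQpos : ∀ n : ℕ, 0 < Q n := fun n => (hmono n).1
  have hQle : ∀ n : ℕ, Q n ≤ Q (n+1) := fun n => (hmono n).2
  -- geometric growth
  have hQ36 : ∀ n : ℕ, 36^n ≤ Q n := by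
    intro n
    induction n with
    | zero => rw [hQ0]; norm_num
    | succ m ih =>
      match m, ih with
      | 0, _ => rw [hQ1]; norm_num
      | Nat.succ l, ih =>
        have h3 := hQr l
        have hm : (0:ℤ) ≤ (l:ℤ) := Int.natCast_nonneg l
        have h36 : (36:ℤ) * Q (l+1) ≤ ((l:ℤ)+7)^2 * Q (l+1) :=
          mul_le_mul_of_nonneg_right (by nlinarith) (hQpos (l+1)).le
        have h4 : (36:ℤ)^(l+1) ≤ Q (l+1) := ih
        have h5 := hQpos l
        calc (36:ℤ)^(l+1+1) = 36 * 36^(l+1) := by ring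
          _ ≤ 36 * Q (l+1) := mul_le_mul_of_nonneg_left h4 (by norm_num)
          _ ≤ ((l:ℤ)+7)^2 * Q (l+1) := h36
          _ ≤ Q (l+2) := by rw [h3]; linarith [hQpos l]
  -- upper growth bound
  have hQup : ∀ n : ℕ, Q (n+1) ≤ (((n:ℤ)+6)^2+1) * Q n := by
    intro n
    match n with
    | 0 => rw [hQ0, hQ1]; norm_num
    | Nat.succ m =>
      have h3 := hQr m
      have h2 := hQle m
      have : ((m+1:ℕ):ℤ) = (m:ℤ)+1 := by push_cast; ring
      rw [this, h3]
      have := hQpos (m+1)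
      nlinarith
  -- determinant
  have hdet : ∀ n : ℕ, P (n+1) * Q n - P n * Q (n+1) = (-1)^n := by
    intro n
    induction n with
    | zero => rw [hP0, hP1, hQ0, hQ1]; norm_num
    | succ m ih =>
      rw [hPr m, hQr m]
      linear_combination (-1 : ℤ) * ih
  -- real versions
  have hQR : ∀ n : ℕ, (0:ℝ) < (Q n : ℝ) := fun n => by exact_mod_cast hQpos n
  have hQRle : ∀ n : ℕ, (Q n : ℝ) ≤ (Q (n+1) : ℝ) := fun n => by exact_mod_cast hQle n
  have htle : ∀ n : ℕ, 1/((Q (n+1):ℝ)*(Q (n+2):ℝ)) ≤ 1/((Q n:ℝ)*(Q (n+1):ℝ)) := by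
    intro n
    apply one_div_le_one_div_of_le (mul_pos (hQR n) (hQR (n+1)))
    exact mul_le_mul (hQRle n) (hQRle (n+1)) (hQR (n+1)).le (hQR (n+1)).le
  have hdiffR : ∀ n : ℕ, (P (n+1):ℝ)/(Q (n+1):ℝ) - (P n:ℝ)/(Q n:ℝ)
      = (-1:ℝ)^n / ((Q n:ℝ) * (Q (n+1):ℝ)) := by
    intro n
    have hd : ((P (n+1):ℝ) * (Q n:ℝ) - (P n:ℝ) * (Q (n+1):ℝ)) = (-1:ℝ)^n := by
      exact_mod_cast congrArg (fun z : ℤ => (z:ℝ)) (hdet n)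
    have h1 := (hQR n).ne'
    have h2 := (hQR (n+1)).ne'
    rw [div_sub_div _ _ h2 h1,
      show (P (n+1):ℝ) * (Q n:ℝ) - (Q (n+1):ℝ) * (P n:ℝ) = (-1:ℝ)^n from by linear_combination hd,
      mul_comm (Q (n+1):ℝ) (Q n:ℝ)]
  have hsumIco : ∀ n m : ℕ, n ≤ m → (P m:ℝ)/(Q m:ℝ) - (P n:ℝ)/(Q n:ℝ)
      = ∑ j ∈ Finset.Ico n m, ((-1:ℝ)^j / ((Q j:ℝ) * (Q (j+1):ℝ))) := by
    intro n m hnm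
    induction m, hnm using Nat.le_induction with
    | base => simp
    | succ m hm ih =>
      rw [Finset.sum_Ico_succ_top hm, ← ih]
      have := hdiffR m
      linarith
  -- alternating partial sum bounds
  have hE : ∀ L n : ℕ,
      0 ≤ (-1:ℝ)^n * ∑ j ∈ Finset.Ico n (n+L), ((-1:ℝ)^j / ((Q j:ℝ) * (Q (j+1):ℝ))) ∧
      (-1:ℝ)^n * ∑ j ∈ Finset.Ico n (n+L), ((-1:ℝ)^j / ((Q j:ℝ) * (Q (j+1):ℝ)))
        ≤ 1/((Q n:ℝ)*(Q (n+1):ℝ)) := by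
    intro L
    induction L with
    | zero =>
      intro n
      simp only [Nat.add_zero, Finset.Ico_self, Finset.sum_empty, mul_zero]
      exact ⟨le_refl _, (one_div_pos.mpr (mul_pos (hQR n) (hQR (n+1)))).le⟩
    | succ L ih =>
      intro n
      have hpow : ((-1:ℝ)^n) * ((-1:ℝ)^n) = 1 := by
        rw [← pow_add]; exact Even.neg_one_pow ⟨n, rfl⟩
      rw [show n+(L+1) = (n+1)+L from by omega,
        Finset.sum_eq_sum_Ico_succ_bot (show n < (n+1)+L from by omega)]
      have expand : (-1:ℝ)^n * ((-1:ℝ)^n/((Q n:ℝ)*(Q (n+1):ℝ))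
            + ∑ j ∈ Finset.Ico (n+1) ((n+1)+L), ((-1:ℝ)^j / ((Q j:ℝ) * (Q (j+1):ℝ))))
          = 1/((Q n:ℝ)*(Q (n+1):ℝ))
            - (-1:ℝ)^(n+1) * ∑ j ∈ Finset.Ico (n+1) ((n+1)+L), ((-1:ℝ)^j / ((Q j:ℝ) * (Q (j+1):ℝ))) := by
        linear_combination (1/((Q n:ℝ)*((Q (n+1):ℝ)))) * hpow
      rw [expand]
      obtain ⟨ih1, ih2⟩ := ih (n+1)
      have h2 := htle n
      constructor
      · linarith
      · linarith
  have hE2 : ∀ L n : ℕ, 1 ≤ L →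
      1/((Q n:ℝ)*(Q (n+1):ℝ)) - 1/((Q (n+1):ℝ)*(Q (n+2):ℝ))
        ≤ (-1:ℝ)^n * ∑ j ∈ Finset.Ico n (n+L), ((-1:ℝ)^j / ((Q j:ℝ) * (Q (j+1):ℝ))) := by
    intro L n hL
    obtain ⟨L', rfl⟩ : ∃ L', L = L' + 1 := ⟨L-1, by omega⟩
    have hpow : ((-1:ℝ)^n) * ((-1:ℝ)^n) = 1 := by
      rw [← pow_add]; exact Even.neg_one_pow ⟨n, rfl⟩
    rw [show n+(L'+1) = (n+1)+L' from by omega,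
      Finset.sum_eq_sum_Ico_succ_bot (show n < (n+1)+L' from by omega)]
    have expand : (-1:ℝ)^n * ((-1:ℝ)^n/((Q n:ℝ)*(Q (n+1):ℝ))
          + ∑ j ∈ Finset.Ico (n+1) ((n+1)+L'), ((-1:ℝ)^j / ((Q j:ℝ) * (Q (j+1):ℝ))))
        = 1/((Q n:ℝ)*(Q (n+1):ℝ))
          - (-1:ℝ)^(n+1) * ∑ j ∈ Finset.Ico (n+1) ((n+1)+L'), ((-1:ℝ)^j / ((Q j:ℝ) * (Q (j+1):ℝ))) := by
      linear_combination (1/((Q n:ℝ)*((Q (n+1):ℝ)))) * hpow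
    rw [expand]
    have := (hE L' (n+1)).2
    linarith
  -- bounds on ρ - convergent
  have hbound : ∀ n : ℕ,
      1/((Q n:ℝ)*(Q (n+1):ℝ)) - 1/((Q (n+1):ℝ)*(Q (n+2):ℝ))
        ≤ (-1:ℝ)^n * (ρ - (P n:ℝ)/(Q n:ℝ)) ∧
      (-1:ℝ)^n * (ρ - (P n:ℝ)/(Q n:ℝ)) ≤ 1/((Q n:ℝ)*(Q (n+1):ℝ)) := by
    intro n
    have hl : Tendsto (fun m : ℕ => (-1:ℝ)^n * ((P m:ℝ)/(Q m:ℝ) - (P n:ℝ)/(Q n:ℝ)))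
        atTop (nhds ((-1:ℝ)^n * (ρ - (P n:ℝ)/(Q n:ℝ)))) := ((hρ.sub_const _).const_mul _)
    constructor
    · refine ge_of_tendsto hl ?_
      filter_upwards [eventually_ge_atTop (n+1)] with m hm
      rw [hsumIco n m (by omega)]
      have h := hE2 (m - n) n (by omega)
      rwa [show n + (m-n) = m from by omega] at h
    · refine le_of_tendsto hl ?_
      filter_upwards [eventually_ge_atTop n] with m hm
      rw [hsumIco n m hm]
      have h := (hE (m - n) n).2
      rwa [show n + (m-n) = m from by omega] at h
  have habs : ∀ n : ℕ,
      |ρ - (P n:ℝ)/(Q n:ℝ)| ≤ 1/((Q n:ℝ)*(Q (n+1):ℝ)) ∧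
      1/((Q n:ℝ)*(Q (n+1):ℝ)) - 1/((Q (n+1):ℝ)*(Q (n+2):ℝ)) ≤ |ρ - (P n:ℝ)/(Q n:ℝ)| := by
    intro n
    obtain ⟨h1, h2⟩ := hbound n
    have h0 : 0 ≤ (-1:ℝ)^n * (ρ - (P n:ℝ)/(Q n:ℝ)) := le_trans (by linarith [htle n]) h1
    have heq : |ρ - (P n:ℝ)/(Q n:ℝ)| = (-1:ℝ)^n * (ρ - (P n:ℝ)/(Q n:ℝ)) := by
      rw [show |ρ - (P n:ℝ)/(Q n:ℝ)| = |(-1:ℝ)^n * (ρ - (P n:ℝ)/(Q n:ℝ))| from by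
          rw [abs_mul, abs_pow, abs_neg, abs_one, one_pow, one_mul],
        abs_of_nonneg h0]
    rw [heq]
    exact ⟨h2, h1⟩
  -- coprimality / divisibility
  have hdvd : ∀ (n : ℕ) (a b : ℤ), a * Q n = b * P n → Q n ∣ b := by
    intro n a b hab
    have hpow : ((-1:ℤ)^n) * ((-1:ℤ)^n) = 1 := by
      rw [← pow_add]; exact Even.neg_one_pow ⟨n, rfl⟩
    have cop : IsCoprime (Q n) (P n) :=
      ⟨(-1)^n * P (n+1), -((-1)^n) * Q (n+1), by linear_combination ((-1:ℤ)^n) * hdet n + hpow⟩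
    exact cop.dvd_of_dvd_mul_right ⟨a, by linarith⟩
  -- the constant K : (n+6)^2+1 ≤ K * (36^δ)^n
  set s : ℝ := (36:ℝ) ^ δ with hs
  have hs1 : 1 < s := by
    rw [hs, Real.one_lt_rpow_iff_of_pos (by norm_num)]
    exact Or.inl ⟨by norm_num, hδ⟩
  have hs0 : 0 < s := by linarith
  have hrn : ‖s⁻¹‖ < 1 := by
    rw [Real.norm_eq_abs, abs_of_pos (inv_pos.mpr hs0)]
    exact inv_lt_one_of_one_lt₀ hs1
  obtain ⟨K0, hK0⟩ : BddAbove (Set.range fun n : ℕ => (((n:ℝ)+6)^2+1) * (s⁻¹)^n) := by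
    apply Filter.Tendsto.bddAbove_range (a := (0:ℝ) + (12*0 + 37*0))
    have t2 := ((summable_norm_pow_mul_geometric_of_norm_lt_one 2 hrn).of_norm).tendsto_atTop_zero
    have t1 := ((summable_norm_pow_mul_geometric_of_norm_lt_one 1 hrn).of_norm).tendsto_atTop_zero
    have t0 := ((summable_norm_pow_mul_geometric_of_norm_lt_one 0 hrn).of_norm).tendsto_atTop_zero
    have := t2.add ((t1.const_mul (12:ℝ)).add (t0.const_mul (37:ℝ)))
    apply Filter.Tendsto.congr _ this
    intro n; push_cast; ring
  set K : ℝ := max K0 1 with hKdef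
  have hK1 : (1:ℝ) ≤ K := le_max_right _ _
  have hKpos : (0:ℝ) < K := by linarith
  have hKs : ∀ n : ℕ, (((n:ℝ)+6)^2+1) ≤ K * s^n := by
    intro n
    have h1 : (((n:ℝ)+6)^2+1) * (s⁻¹)^n ≤ K0 := hK0 ⟨n, rfl⟩
    have h2 : (((n:ℝ)+6)^2+1) * (s⁻¹)^n ≤ K := le_trans h1 (le_max_left _ _)
    have h3 : (0:ℝ) < s^n := pow_pos hs0 n
    have h4 : (s⁻¹)^n * s^n = 1 := by
      rw [← mul_pow, inv_mul_cancel₀ hs0.ne', one_pow]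
    calc (((n:ℝ)+6)^2+1) = (((n:ℝ)+6)^2+1) * ((s⁻¹)^n * s^n) := by rw [h4, mul_one]
      _ = ((((n:ℝ)+6)^2+1) * (s⁻¹)^n) * s^n := by ring
      _ ≤ K * s^n := mul_le_mul_of_nonneg_right h2 h3.le
  -- half bound
  have hQ2 : ∀ n : ℕ, 2 * Q n ≤ Q (n+2) := by
    intro n
    have h3 := hQr n
    have h1 : Q (n+1) ≤ ((n:ℤ)+7)^2 * Q (n+1) :=
      le_mul_of_one_le_left (hQpos (n+1)).le (by nlinarith [Int.natCast_nonneg n])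
    linarith [hQle n]
  have hthalf : ∀ n : ℕ, 1/((Q (n+1):ℝ)*(Q (n+2):ℝ)) ≤ (1/((Q n:ℝ)*(Q (n+1):ℝ)))/2 := by
    intro n
    have h2 : (2:ℝ) * (Q n:ℝ) ≤ (Q (n+2):ℝ) := by exact_mod_cast hQ2 n
    have hpos : (0:ℝ) < (Q (n+1):ℝ) * (2 * (Q n:ℝ)) := by
      have := hQR n; have := hQR (n+1); nlinarith
    calc 1/((Q (n+1):ℝ)*(Q (n+2):ℝ)) ≤ 1/((Q (n+1):ℝ) * (2 * (Q n:ℝ))) :=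
          one_div_le_one_div_of_le hpos (mul_le_mul_of_nonneg_left h2 (hQR (n+1)).le)
      _ = (1/((Q n:ℝ)*(Q (n+1):ℝ)))/2 := by
          have h1 := (hQR n).ne'
          have h2' := (hQR (n+1)).ne'
          field_simp
  -- the main claim for positive b
  set C : ℝ := min ((4:ℝ)⁻¹) ((2*K)⁻¹) with hC
  have hCpos : 0 < C := lt_min (by norm_num) (by positivity)
  refine ⟨C, hCpos, ?_⟩
  have main : ∀ a b : ℤ, 0 < b → C / (b:ℝ) ^ ((2:ℝ)+δ) ≤ |ρ - (a:ℝ)/(b:ℝ)| := by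
    intro a b hb
    have hbR : (0:ℝ) < (b:ℝ) := by exact_mod_cast hb
    have hb1 : (1:ℝ) ≤ (b:ℝ) := by exact_mod_cast hb
    have hbr : (0:ℝ) < (b:ℝ) ^ ((2:ℝ)+δ) := Real.rpow_pos_of_pos hbR _
    -- choose minimal n with 2*b ≤ Q (n+1)
    have hex : ∃ n : ℕ, 2*b ≤ Q (n+1) := by
      refine ⟨(2*b).toNat, ?_⟩
      have h1 : ((2*b).toNat : ℤ) = 2*b := Int.toNat_of_nonneg (by omega)
      have h2 : ((2*b).toNat : ℤ) < 36 ^ ((2*b).toNat) := by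
        exact_mod_cast (Nat.lt_pow_self (by norm_num : 1 < 36) : (2*b).toNat < 36 ^ (2*b).toNat)
      have h3 : (36:ℤ) ^ ((2*b).toNat) ≤ 36 ^ ((2*b).toNat + 1) :=
        pow_le_pow_right₀ (by norm_num) (Nat.le_succ _)
      have h4 := hQ36 ((2*b).toNat + 1)
      omega
    set n : ℕ := Nat.find hex with hn
    have hnspec : 2*b ≤ Q (n+1) := Nat.find_spec hex
    have hnmin : Q n ≤ 2*b := by
      rcases Nat.eq_zero_or_pos n with h0 | h0
      · rw [h0, hQ0]; omega
      · have h1 := Nat.find_min hex (show n - 1 < Nat.find hex from by rw [← hn]; omega)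
        have h2 : n - 1 + 1 = n := by omega
        rw [h2] at h1
        omega
    have hQnb : (Q n : ℝ) ≤ 2 * (b:ℝ) := by exact_mod_cast hnmin
    have hQn1b : 2 * (b:ℝ) ≤ (Q (n+1):ℝ) := by exact_mod_cast hnspec
    by_cases hcase : a * Q n = b * P n
    · -- a/b equals the convergent p n / q n
      have hdvd' : Q n ∣ b := hdvd n a b hcase
      have hQnleb : Q n ≤ b := Int.le_of_dvd hb hdvd'
      have hQnlebR : (Q n:ℝ) ≤ (b:ℝ) := by exact_mod_cast hQnleb
      have hceq : (a:ℝ)/(b:ℝ) = (P n:ℝ)/(Q n:ℝ) := by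
        rw [div_eq_div_iff hbR.ne' (hQR n).ne']
        exact_mod_cast hcase.trans (mul_comm b (P n))
      rw [hceq]
      have hlow := (habs n).2
      have hhalf := hthalf n
      -- Q n * Q (n+1) ≤ K * b ^ (2+δ)
      have hQn1up : (Q (n+1):ℝ) ≤ (((n:ℝ)+6)^2+1) * (Q n:ℝ) := by exact_mod_cast hQup n
      have hsn : s^n ≤ (Q n:ℝ)^δ := by
        have h36 : ((36:ℝ))^n ≤ (Q n:ℝ) := by exact_mod_cast hQ36 n
        have e1 : s^n = ((36:ℝ)^n)^δ := by
          rw [hs, ← Real.rpow_natCast ((36:ℝ)^δ) n,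
            ← Real.rpow_mul (by norm_num : (0:ℝ) ≤ 36), mul_comm,
            Real.rpow_mul (by norm_num : (0:ℝ) ≤ 36), Real.rpow_natCast]
        rw [e1]
        exact Real.rpow_le_rpow (by positivity) h36 hδ.le
      have hQpow : (Q n:ℝ) * (Q (n+1):ℝ) ≤ K * (b:ℝ)^((2:ℝ)+δ) := by
        have h1 : (Q n:ℝ) * (Q (n+1):ℝ) ≤ (Q n:ℝ) * ((K * s^n) * (Q n:ℝ)) := by
          apply mul_le_mul_of_nonneg_left _ (hQR n).le
          calc (Q (n+1):ℝ) ≤ (((n:ℝ)+6)^2+1) * (Q n:ℝ) := hQn1up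
            _ ≤ (K * s^n) * (Q n:ℝ) := mul_le_mul_of_nonneg_right (hKs n) (hQR n).le
        have h2 : (Q n:ℝ) * ((K * s^n) * (Q n:ℝ)) ≤ K * ((Q n:ℝ)^((2:ℝ)+δ)) := by
          have e2 : (Q n:ℝ)^((2:ℝ)+δ) = (Q n:ℝ)^(2:ℕ) * (Q n:ℝ)^δ := by
            rw [Real.rpow_add (hQR n), show ((2:ℝ)) = ((2:ℕ):ℝ) from by norm_num,
              Real.rpow_natCast]
          rw [e2]
          have hfh : K * (Q n:ℝ)^(2:ℕ) * s^n ≤ K * (Q n:ℝ)^(2:ℕ) * (Q n:ℝ)^δ :=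
            mul_le_mul_of_nonneg_left hsn
              (mul_nonneg hKpos.le (by positivity))
          calc (Q n:ℝ) * ((K*s^n)*(Q n:ℝ)) = K * (Q n:ℝ)^(2:ℕ) * s^n := by ring
            _ ≤ K * (Q n:ℝ)^(2:ℕ) * (Q n:ℝ)^δ := hfh
            _ = K * ((Q n:ℝ)^(2:ℕ) * (Q n:ℝ)^δ) := by ring
        have h4 : (Q n:ℝ)^((2:ℝ)+δ) ≤ (b:ℝ)^((2:ℝ)+δ) :=
          Real.rpow_le_rpow (hQR n).le hQnlebR (by linarith)
        calc (Q n:ℝ) * (Q (n+1):ℝ) ≤ K * ((Q n:ℝ)^((2:ℝ)+δ)) := le_trans h1 h2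
          _ ≤ K * (b:ℝ)^((2:ℝ)+δ) := mul_le_mul_of_nonneg_left h4 hKpos.le
      have hfinal : C / (b:ℝ)^((2:ℝ)+δ) ≤ 1/(2*((Q n:ℝ) * (Q (n+1):ℝ))) := by
        have hQQpos : (0:ℝ) < (Q n:ℝ) * (Q (n+1):ℝ) := mul_pos (hQR n) (hQR (n+1))
        rw [div_le_div_iff₀ hbr (by linarith : (0:ℝ) < 2*((Q n:ℝ) * (Q (n+1):ℝ)))]
        have hCle : C ≤ (2*K)⁻¹ := min_le_right _ _
        have hmm : C * (2*((Q n:ℝ)*(Q (n+1):ℝ))) ≤ (2*K)⁻¹ * (2*(K * (b:ℝ)^((2:ℝ)+δ))) :=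
          mul_le_mul hCle (by linarith [hQpow]) (by linarith)
            (inv_nonneg.mpr (by linarith))
        have heq : (2*K)⁻¹ * (2*(K * (b:ℝ)^((2:ℝ)+δ))) = (b:ℝ)^((2:ℝ)+δ) := by
          field_simp
        linarith
      refine le_trans hfinal ?_
      calc 1/(2*((Q n:ℝ) * (Q (n+1):ℝ))) = (1/((Q n:ℝ) * (Q (n+1):ℝ)))/2 := by ring
        _ ≤ 1/((Q n:ℝ)*(Q (n+1):ℝ)) - 1/((Q (n+1):ℝ)*(Q (n+2):ℝ)) := by linarith
        _ ≤ |ρ - (P n:ℝ)/(Q n:ℝ)| := hlow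
    · -- a/b is not the convergent
      have hne : a * Q n - b * P n ≠ 0 := fun h => hcase (by linarith)
      have habd : (1:ℝ) ≤ |((a * Q n - b * P n : ℤ) : ℝ)| := by
        rw [← Int.cast_abs]
        exact_mod_cast Int.one_le_abs hne
      have hfrac : 1/((b:ℝ) * (Q n:ℝ)) ≤ |(a:ℝ)/(b:ℝ) - (P n:ℝ)/(Q n:ℝ)| := by
        have heq : (a:ℝ)/(b:ℝ) - (P n:ℝ)/(Q n:ℝ)
            = ((a * Q n - b * P n : ℤ):ℝ)/((b:ℝ)*(Q n:ℝ)) := by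
          have hb0 := hbR.ne'
          have hq0 := (hQR n).ne'
          push_cast
          field_simp
        rw [heq, abs_div, abs_of_pos (mul_pos hbR (hQR n))]
        exact (div_le_div_iff_of_pos_right (mul_pos hbR (hQR n))).mpr habd
      have hup := (habs n).1
      have hup2 : |ρ - (P n:ℝ)/(Q n:ℝ)| ≤ 1/((Q n:ℝ) * (2*(b:ℝ))) := by
        refine le_trans hup (one_div_le_one_div_of_le (mul_pos (hQR n) (by linarith)) ?_)
        exact mul_le_mul_of_nonneg_left hQn1b (hQR n).le
      have htri : 1/((b:ℝ) * (Q n:ℝ)) ≤ |ρ - (a:ℝ)/(b:ℝ)| + |ρ - (P n:ℝ)/(Q n:ℝ)| := by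
        refine le_trans hfrac ?_
        calc |(a:ℝ)/(b:ℝ) - (P n:ℝ)/(Q n:ℝ)|
            = |((a:ℝ)/(b:ℝ) - ρ) + (ρ - (P n:ℝ)/(Q n:ℝ))| := by congr 1; ring
          _ ≤ |(a:ℝ)/(b:ℝ) - ρ| + |ρ - (P n:ℝ)/(Q n:ℝ)| := abs_add_le _ _
          _ = |ρ - (a:ℝ)/(b:ℝ)| + |ρ - (P n:ℝ)/(Q n:ℝ)| := by rw [abs_sub_comm]
      have hlow2 : 1/(2*(b:ℝ) * (Q n:ℝ)) ≤ |ρ - (a:ℝ)/(b:ℝ)| := by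
        have e : 1/((Q n:ℝ) * (2*(b:ℝ))) = (1/((b:ℝ) * (Q n:ℝ)))/2 := by ring
        have h5 : 1/((b:ℝ)*(Q n:ℝ)) - 1/((Q n:ℝ)*(2*(b:ℝ))) ≤ |ρ - (a:ℝ)/(b:ℝ)| := by
          linarith
        calc 1/(2*(b:ℝ) * (Q n:ℝ)) = 1/((b:ℝ)*(Q n:ℝ)) - (1/((b:ℝ)*(Q n:ℝ)))/2 := by ring
          _ = 1/((b:ℝ)*(Q n:ℝ)) - 1/((Q n:ℝ)*(2*(b:ℝ))) := by rw [e]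
          _ ≤ |ρ - (a:ℝ)/(b:ℝ)| := h5
      refine le_trans ?_ hlow2
      have hb2 : (b:ℝ)^(2:ℕ) ≤ (b:ℝ)^((2:ℝ)+δ) := by
        have := Real.rpow_le_rpow_of_exponent_le hb1 (show (2:ℝ) ≤ 2 + δ by linarith)
        rwa [show ((2:ℝ):ℝ) = ((2:ℕ):ℝ) from by norm_num, Real.rpow_natCast] at this
      calc C / (b:ℝ)^((2:ℝ)+δ) ≤ (4:ℝ)⁻¹ / (b:ℝ)^(2:ℕ) := by
            apply div_le_div₀ (by norm_num) (min_le_left _ _) (by positivity) hb2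
        _ = 1/(4*(b:ℝ)^(2:ℕ)) := by
            rw [inv_eq_one_div, div_div]
        _ ≤ 1/(2*(b:ℝ) * (Q n:ℝ)) := by
            apply one_div_le_one_div_of_le (mul_pos (by linarith : (0:ℝ) < 2*(b:ℝ)) (hQR n))
            nlinarith [mul_le_mul_of_nonneg_left hQnb (by linarith : (0:ℝ) ≤ 2*(b:ℝ))]
  -- reduce general b to positive b
  intro a b hb
  rcases hb.lt_or_gt with hneg | hpos
  · have h := main (-a) (-b) (by omega)
    have e1 : ((-a:ℤ):ℝ)/((-b:ℤ):ℝ) = (a:ℝ)/(b:ℝ) := by push_cast; rw [neg_div_neg_eq]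
    have e3 : ((-b:ℤ):ℝ) = |(b:ℝ)| := by
      rw [abs_of_neg (show (b:ℝ) < 0 from by exact_mod_cast hneg)]
      push_cast
      ring
    rw [e1] at h
    rw [← e3]
    exact h
  · have h := main a b hpos
    have e3 : ((b:ℤ):ℝ) = |(b:ℝ)| := by
      rw [abs_of_pos (show (0:ℝ) < (b:ℝ) from by exact_mod_cast hpos)]
    rw [← e3]
    exact h

theorem stmt19
    (k : ℤ → ℤ) (hk : ∀ n : ℤ, 1 ≤ n → k n = (n + 5) ^ 2)
    (p q : ℤ → ℤ)
    (hp0 : p 0 = 0) (hq0 : q 0 = 1) (hpm : p (-1) = 1) (hqm : q (-1) = 0)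
    (hp : ∀ n : ℤ, 1 ≤ n → p n = k n * p (n - 1) + p (n - 2))
    (hq : ∀ n : ℤ, 1 ≤ n → q n = k n * q (n - 1) + q (n - 2))
    (ρ : ℝ)
    (hρ : Tendsto (fun n : ℕ => (p n : ℝ) / (q n : ℝ)) atTop (nhds ρ)) :
    (∀ δ : ℝ, 0 < δ → ∃ C : ℝ, 0 < C ∧ ∀ a b : ℤ, b ≠ 0 →
      C / (|b| : ℝ) ^ ((2 : ℝ) + δ) ≤ |ρ - (a : ℝ) / (b : ℝ)|) ∧
    ¬ ∃ B : ℤ, ∀ n : ℤ, 1 ≤ n → k n ≤ B := by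
  constructor
  · intro δ hδ
    have hk1 : k 1 = 36 := by rw [hk 1 (le_refl 1)]; norm_num
    have hp1 : p 1 = 1 := by
      have h1 := hp 1 (le_refl 1)
      rw [hk1] at h1
      norm_num at h1
      rw [h1, hp0, hpm]
      ring
    have hq1 : q 1 = 36 := by
      have h1 := hq 1 (le_refl 1)
      rw [hk1] at h1
      norm_num at h1
      rw [h1, hq0, hqm]
      ring
    have hPr : ∀ n : ℕ, p ((n+2:ℕ):ℤ) = ((n:ℤ)+7)^2 * p ((n+1:ℕ):ℤ) + p ((n:ℕ):ℤ) := by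
      intro n
      have hn2 : (1:ℤ) ≤ (n:ℤ)+2 := by linarith [Int.natCast_nonneg n]
      have h1 := hp ((n:ℤ)+2) hn2
      rw [hk ((n:ℤ)+2) hn2] at h1
      have e1 : ((n:ℤ)+2) - 1 = ((n+1:ℕ):ℤ) := by push_cast; ring
      have e2 : ((n:ℤ)+2) - 2 = ((n:ℕ):ℤ) := by push_cast; ring
      rw [e1, e2] at h1
      have e0 : ((n+2:ℕ):ℤ) = (n:ℤ)+2 := by push_cast; ring
      rw [e0, h1]
      ring
    have hQr : ∀ n : ℕ, q ((n+2:ℕ):ℤ) = ((n:ℤ)+7)^2 * q ((n+1:ℕ):ℤ) + q ((n:ℕ):ℤ) := by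
      intro n
      have hn2 : (1:ℤ) ≤ (n:ℤ)+2 := by linarith [Int.natCast_nonneg n]
      have h1 := hq ((n:ℤ)+2) hn2
      rw [hk ((n:ℤ)+2) hn2] at h1
      have e1 : ((n:ℤ)+2) - 1 = ((n+1:ℕ):ℤ) := by push_cast; ring
      have e2 : ((n:ℤ)+2) - 2 = ((n:ℕ):ℤ) := by push_cast; ring
      rw [e1, e2] at h1
      have e0 : ((n+2:ℕ):ℤ) = (n:ℤ)+2 := by push_cast; ring
      rw [e0, h1]
      ring
    exact roth_aux (fun n : ℕ => p n) (fun n : ℕ => q n)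
      (by simpa using hp0) (by simpa using hq0) (by simpa using hp1) (by simpa using hq1)
      hPr hQr ρ hρ δ hδ
  · rintro ⟨B, hB⟩
    have hm1 : (1:ℤ) ≤ max 1 (B+1) := le_max_left _ _
    have h := hB (max 1 (B+1)) hm1
    rw [hk _ hm1] at h
    have hm2 : B + 1 ≤ max 1 (B+1) := le_max_right _ _
    nlinarith [hm1, hm2]
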